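/- Let H be a real Hilbert space and let A, B ⊆ H be nonempty closed convex sets. If x ∈ A, then P_B(x) is a circumcenter of x with respect to (A, B), and it is the unique such circumcenter; in particular, the CRM step from a point of A lands in B. -/

import Mathlib

open RealInnerProductSpace Pointwise

/-- `p` is the metric projection of `x` onto `C`: the point of `C` such that
`⟪y - p, x - p⟫ ≤ 0` for all `y ∈ C`. -/
def IsProj {E : Type*} [NormedAddCommGroup E] [InnerProductSpace ℝ E]
    (C : Set E) (x p : E) : Prop :=
  p ∈ C ∧ ∀ y ∈ C, ⟪y - p, x - p⟫ ≤ 0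

/-- `c` is a circumcenter of `x` with respect to `(A, B)`: writing `R_A x = 2 P_A x - x`
and `R_B (R_A x) = 2 P_B (R_A x) - R_A x`, the point `c` lies in the affine span of
`{x, R_A x, R_B (R_A x)}` and is equidistant from these three points. -/
def IsCircumcenter {E : Type*} [NormedAddCommGroup E] [InnerProductSpace ℝ E]
    (A B : Set E) (x c : E) : Prop :=
  ∃ pa pb : E, IsProj A x pa ∧ IsProj B ((2 : ℝ) • pa - x) pb ∧
    c ∈ affineSpan ℝ
      ({x, (2 : ℝ) • pa - x, (2 : ℝ) • pb - ((2 : ℝ) • pa - x)} : Set E) ∧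
    ‖c - x‖ = ‖c - ((2 : ℝ) • pa - x)‖ ∧
    ‖c - x‖ = ‖c - ((2 : ℝ) • pb - ((2 : ℝ) • pa - x))‖

lemma isProj_unique {E : Type*} [NormedAddCommGroup E] [InnerProductSpace ℝ E]
    {C : Set E} {x p q : E} (hp : IsProj C x p) (hq : IsProj C x q) : p = q := by
  obtain ⟨hpC, hp2⟩ := hp
  obtain ⟨hqC, hq2⟩ := hq
  have h1 := hp2 q hqC
  have h2 := hq2 p hpC
  have key : ⟪q - p, q - p⟫ ≤ 0 := by
    have e : ⟪q - p, q - p⟫ = ⟪q - p, x - p⟫ + ⟪p - q, x - q⟫ := by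
      simp only [inner_sub_left, inner_sub_right]
      rw [real_inner_comm q p]
      ring
    linarith
  have hqp : q - p = 0 := by
    have hn := real_inner_self_nonneg (x := q - p)
    exact inner_self_eq_zero.mp (le_antisymm key hn)
  exact (sub_eq_zero.mp hqp).symm

lemma two_smul_sub_self {E : Type*} [NormedAddCommGroup E] [InnerProductSpace ℝ E]
    (x : E) : (2 : ℝ) • x - x = x := by
  rw [two_smul]; abel

theorem crm_step_from_A
    {H : Type*} [NormedAddCommGroup H] [InnerProductSpace ℝ H] [CompleteSpace H]
    (A B : Set H) (hAne : A.Nonempty) (hAcl : IsClosed A) (hAcv : Convex ℝ A)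
    (hBne : B.Nonempty) (hBcl : IsClosed B) (hBcv : Convex ℝ B)
    (x : H) (hxA : x ∈ A) (pb : H) (hpb : IsProj B x pb) :
    IsCircumcenter A B x pb ∧ (∀ c : H, IsCircumcenter A B x c → c = pb) ∧ pb ∈ B := by
  have hprojAx : IsProj A x x := ⟨hxA, fun y _ => by simp⟩
  have hxx : (2 : ℝ) • x - x = x := two_smul_sub_self x
  refine ⟨?_, ?_, hpb.1⟩
  · refine ⟨x, pb, hprojAx, by rwa [hxx], ?_, ?_, ?_⟩
    · rw [hxx]
      have hset : ({x, x, (2 : ℝ) • pb - x} : Set H) = {x, (2 : ℝ) • pb - x} := by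
        simp
      rw [hset]
      have hmem := smul_vsub_vadd_mem_affineSpan_pair (k := ℝ) (1/2 : ℝ) x ((2 : ℝ) • pb - x)
      have heq : (1/2 : ℝ) • ((2 : ℝ) • pb - x -ᵥ x) +ᵥ x = pb := by
        simp only [vsub_eq_sub, vadd_eq_add]
        module
      rwa [heq] at hmem
    · rw [hxx]
    · rw [hxx]
      have : pb - ((2 : ℝ) • pb - x) = -(pb - x) := by rw [two_smul]; abel
      rw [this, norm_neg]
  · rintro c ⟨pa', pb', hpa', hpb', hspan, hn1, hn2⟩
    have hpa : pa' = x := isProj_unique hpa' hprojAx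
    rw [hpa] at hpb' hspan hn1 hn2
    rw [hxx] at hpb' hspan hn1 hn2
    have hpbe : pb' = pb := isProj_unique hpb' hpb
    subst hpbe
    have hset : ({x, x, (2 : ℝ) • pb' - x} : Set H) = {x, (2 : ℝ) • pb' - x} := by
      simp
    rw [hset] at hspan
    have hspan' : (c - x) +ᵥ x ∈ line[ℝ, x, (2 : ℝ) • pb' - x] := by
      simpa using hspan
    obtain ⟨r, hr0⟩ := vadd_left_mem_affineSpan_pair.mp hspan'
    simp only [vsub_eq_sub] at hr0
    set v : H := (2 : ℝ) • pb' - x - x with hv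
    have hr : r • v + x = c := by rw [hr0]; abel
    have hcx : c - x = r • v := by rw [← hr]; abel
    have hcz : c - ((2 : ℝ) • pb' - x) = (r - 1) • v := by
      rw [← hr, sub_smul, one_smul, hv]; abel
    rw [hcx, hcz, norm_smul, norm_smul] at hn2
    by_cases hv0 : v = 0
    · have hpx : pb' = x := by
        have : (2 : ℝ) • pb' - x - x = 0 := hv0
        have h2 : (2 : ℝ) • pb' = (2 : ℝ) • x := by
          rw [sub_sub, sub_eq_zero] at this
          rw [this, two_smul]
        exact smul_right_injective H (by norm_num) h2
      have : c = x := by rw [← hr, hv0]; simp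
      rw [this, hpx]
    · have hvn : ‖v‖ ≠ 0 := norm_ne_zero_iff.mpr hv0
      have habs : |r| = |r - 1| := by
        rw [Real.norm_eq_abs, Real.norm_eq_abs] at hn2
        exact mul_right_cancel₀ hvn hn2
      have hr12 : r = 1/2 := by
        rcases abs_eq_abs.mp habs with h | h
        · linarith
        · linarith
      rw [← hr, hr12, hv, two_smul]
      module
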